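/- Let X be a vector space with a complete invariant metric d and f : [a,b] → X a function. Then f is Darboux integrable (for every ε > 0 there exists a partition Δ_ε of [a,b] such that ω(f, Δ) < ε for every partition Δ refining Δ_ε) if and only if f is bounded and continuous almost everywhere on [a,b] (with respect to Lebesgue measure). -/

import Mathlib

open Set MeasureTheory

/-- A tagged partition of `[a,b]`: points `a = t 0 < t 1 < ⋯ < t n = b`
with tags `s i ∈ [t i, t (i+1)]`. -/
structure TaggedPartition (a b : ℝ) where
  n : ℕ
  t : ℕ → ℝ
  s : ℕ → ℝ
  npos : 0 < n
  left : t 0 = a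
  right : t n = b
  mono : ∀ i < n, t i < t (i + 1)
  tag_mem : ∀ i < n, s i ∈ Set.Icc (t i) (t (i + 1))

/-- The mesh of the partition is `< δ`. -/
def TaggedPartition.MeshLT {a b : ℝ} (P : TaggedPartition a b) (δ : ℝ) : Prop :=
  ∀ i < P.n, P.t (i + 1) - P.t i < δ

/-- The set of partition points of a tagged partition. -/
def TaggedPartition.points {a b : ℝ} (P : TaggedPartition a b) : Set ℝ :=
  {x | ∃ i ≤ P.n, P.t i = x}

/-- The Riemann sum `f(Δ) = Σᵢ (tᵢ₊₁ - tᵢ) • f(sᵢ)`. -/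
def riemannSum {X : Type*} [AddCommGroup X] [Module ℝ X]
    (f : ℝ → X) {a b : ℝ} (P : TaggedPartition a b) : X :=
  ∑ i ∈ Finset.range P.n, (P.t (i + 1) - P.t i) • f (P.s i)

/-- `f` has Riemann integral `x` on `[a,b]` (mesh-based definition, metric `dist`). -/
def HasRiemannIntegral {X : Type*} [MetricSpace X] [AddCommGroup X] [Module ℝ X]
    (f : ℝ → X) (a b : ℝ) (x : X) : Prop :=
  ∀ ε > 0, ∃ δ > 0, ∀ P : TaggedPartition a b, P.MeshLT δ →
    dist (riemannSum f P) x < ε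

/-- The oscillation sum `ω(f,Δ) = Σᵢ ω(f,[tᵢ,tᵢ₊₁])·(tᵢ₊₁ − tᵢ)` of `f` over a
partition (tags are irrelevant), where the oscillation over an interval is the
diameter of the image. -/
noncomputable def oscSum {X : Type*} [MetricSpace X]
    (f : ℝ → X) {a b : ℝ} (P : TaggedPartition a b) : ENNReal :=
  ∑ i ∈ Finset.range P.n,
    EMetric.diam (f '' Set.Icc (P.t i) (P.t (i + 1))) * ENNReal.ofReal (P.t (i + 1) - P.t i)

/-- `f` is Darboux integrable on `[a,b]`: for every `ε > 0` there is a
partition such that every refining partition has oscillation sum `< ε`. -/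
def DarbouxIntegrable {X : Type*} [MetricSpace X] (f : ℝ → X) (a b : ℝ) : Prop :=
  ∀ ε : ℝ, 0 < ε → ∃ P₀ : TaggedPartition a b, ∀ P : TaggedPartition a b,
    P₀.points ⊆ P.points → oscSum f P < ENNReal.ofReal ε

namespace TaggedPartition

variable {a b : ℝ} (P : TaggedPartition a b)

lemma t_mono {i j : ℕ} (hij : i ≤ j) (hj : j ≤ P.n) : P.t i ≤ P.t j := by
  induction j, hij using Nat.le_induction with
  | base => exact le_rfl
  | succ j' h' ih =>
    exact le_trans (ih (by omega)) (le_of_lt (P.mono j' (by omega)))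

lemma t_mem_Icc {i : ℕ} (hi : i ≤ P.n) : P.t i ∈ Icc a b := by
  constructor
  · have := P.t_mono (Nat.zero_le i) hi; rwa [P.left] at this
  · have := P.t_mono hi le_rfl; rwa [P.right] at this

lemma Icc_subset {i : ℕ} (hi : i < P.n) : Icc (P.t i) (P.t (i + 1)) ⊆ Icc a b :=
  Icc_subset_Icc (P.t_mem_Icc (le_of_lt hi)).1 (P.t_mem_Icc hi).2

lemma len_pos {i : ℕ} (hi : i < P.n) : 0 < P.t (i + 1) - P.t i :=
  sub_pos.2 (P.mono i hi)

/-- find the subinterval containing a given point -/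
lemma exists_idx {x : ℝ} (hx : x ∈ Icc a b) :
    ∃ i < P.n, x ∈ Icc (P.t i) (P.t (i + 1)) := by
  classical
  set S := (Finset.range P.n).filter (fun i => P.t i ≤ x) with hS
  have h0 : 0 ∈ S := by
    simp [hS, Finset.mem_filter, P.npos, P.left, hx.1]
  have hne : S.Nonempty := ⟨0, h0⟩
  set i := S.max' hne with hi
  have hiS : i ∈ S := S.max'_mem hne
  have hin : i < P.n := (Finset.mem_filter.1 hiS).2 |> fun _ => (Finset.mem_range.1 (Finset.mem_filter.1 hiS).1)
  have hle : P.t i ≤ x := (Finset.mem_filter.1 hiS).2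
  refine ⟨i, hin, hle, ?_⟩
  by_contra hgt
  push_neg at hgt
  have h1 : i + 1 < P.n := by
    rcases eq_or_lt_of_le (Nat.succ_le_of_lt hin) with h | h
    · exfalso; have := hx.2; rw [← P.right, ← h] at this; linarith
    · exact h
  have : i + 1 ∈ S := Finset.mem_filter.2 ⟨Finset.mem_range.2 h1, le_of_lt hgt⟩
  have := S.le_max' _ this
  omega

/-- each subinterval of a refinement is inside some subinterval of the original -/
lemma exists_contain (P₀ : TaggedPartition a b) (hsub : P₀.points ⊆ P.points)
    {j : ℕ} (hj : j < P.n) :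
    ∃ i < P₀.n, P₀.t i ≤ P.t j ∧ P.t (j + 1) ≤ P₀.t (i + 1) := by
  classical
  set S := (Finset.range P₀.n).filter (fun i => P₀.t i ≤ P.t j) with hS
  have h0 : 0 ∈ S := by
    have : P₀.t 0 ≤ P.t j := by
      have := P.t_mono (Nat.zero_le j) (le_of_lt hj)
      rw [P.left] at this; rw [P₀.left]; exact this
    simp [hS, Finset.mem_filter, P₀.npos, this]
  have hne : S.Nonempty := ⟨0, h0⟩
  set i := S.max' hne with hi
  have hiS : i ∈ S := S.max'_mem hne
  have hin : i < P₀.n := Finset.mem_range.1 (Finset.mem_filter.1 hiS).1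
  have hle : P₀.t i ≤ P.t j := (Finset.mem_filter.1 hiS).2
  refine ⟨i, hin, hle, ?_⟩
  by_contra hgt
  push_neg at hgt
  have h1 : i + 1 < P₀.n := by
    rcases eq_or_lt_of_le (Nat.succ_le_of_lt hin) with h | h
    · exfalso
      have h2 : P.t (j + 1) ≤ b := (P.t_mem_Icc (Nat.succ_le_of_lt hj)).2
      have h3 : P₀.t (i+1) = b := by rw [show i + 1 = P₀.n from h, P₀.right]
      linarith
    · exact h
  have hnotS : i + 1 ∉ S := fun hmem => by have := S.le_max' _ hmem; omega
  have hgt' : P.t j < P₀.t (i + 1) := by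
    by_contra hcon; push_neg at hcon
    exact hnotS (Finset.mem_filter.2 ⟨Finset.mem_range.2 h1, hcon⟩)
  obtain ⟨m, hm, hmt⟩ := hsub ⟨i + 1, le_of_lt h1, rfl⟩
  have hmj : j < m := by
    by_contra hc; push_neg at hc
    have := P.t_mono hc (le_of_lt hj)
    rw [hmt] at this; linarith
  have hmj' : m < j + 1 := by
    by_contra hc; push_neg at hc
    have := P.t_mono hc hm
    rw [hmt] at this; linarith
  omega

lemma disjoint_Ioc {i j : ℕ} (hj : j < P.n) (hij : i < j) :
    Disjoint (Ioc (P.t i) (P.t (i + 1))) (Ioc (P.t j) (P.t (j + 1))) := by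
  have h : P.t (i + 1) ≤ P.t j := P.t_mono (Nat.succ_le_of_lt hij) (le_of_lt hj)
  rw [Set.disjoint_left]
  rintro x ⟨_, h2⟩ ⟨h3, _⟩
  linarith

/-- sum of lengths of disjoint subintervals inside `T` is at most `volume T` -/
lemma sum_len_le (s : Finset ℕ) (hs : s ⊆ Finset.range P.n) {T : Set ℝ}
    (hsub : ∀ i ∈ s, Ioc (P.t i) (P.t (i + 1)) ⊆ T) :
    ∑ i ∈ s, ENNReal.ofReal (P.t (i + 1) - P.t i) ≤ volume T := by
  have h1 : ∀ i ∈ s, ENNReal.ofReal (P.t (i + 1) - P.t i)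
      = volume (Ioc (P.t i) (P.t (i + 1))) := by
    intro i _; rw [Real.volume_Ioc]
  rw [Finset.sum_congr rfl h1]
  rw [← measure_biUnion_finset ?_ (fun _ _ => measurableSet_Ioc)]
  · exact measure_mono (Set.iUnion₂_subset hsub)
  · intro i hi j hj hij
    rcases lt_or_gt_of_ne hij with h | h
    · exact P.disjoint_Ioc (Finset.mem_range.1 (hs hj)) h
    · exact (P.disjoint_Ioc (Finset.mem_range.1 (hs hi)) h).symm

lemma points_finite : P.points.Finite := by
  have : P.points ⊆ P.t '' (Iic P.n) := by
    rintro x ⟨i, hi, rfl⟩; exact ⟨i, hi, rfl⟩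
  exact ((Set.finite_Iic _).image _).subset this

end TaggedPartition

section
variable {X : Type*} [MetricSpace X] {a b : ℝ}

lemma oscSum_mono (f : ℝ → X) (P₀ P : TaggedPartition a b)
    (hsub : P₀.points ⊆ P.points) : oscSum f P ≤ oscSum f P₀ := by
  classical
  have H : ∀ j : ℕ, ∃ i : ℕ, j < P.n →
      i < P₀.n ∧ P₀.t i ≤ P.t j ∧ P.t (j + 1) ≤ P₀.t (i + 1) := by
    intro j
    by_cases hj : j < P.n
    · obtain ⟨i, h1, h2, h3⟩ := P.exists_contain P₀ hsub hj
      exact ⟨i, fun _ => ⟨h1, h2, h3⟩⟩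
    · exact ⟨0, fun h => absurd h hj⟩
  choose σ hσ using H
  calc oscSum f P
      ≤ ∑ j ∈ Finset.range P.n,
          EMetric.diam (f '' Icc (P₀.t (σ j)) (P₀.t (σ j + 1)))
            * ENNReal.ofReal (P.t (j + 1) - P.t j) := by
        refine Finset.sum_le_sum fun j hj => ?_
        obtain ⟨_, h2, h3⟩ := hσ j (Finset.mem_range.1 hj)
        exact mul_le_mul_left (EMetric.diam_mono (Set.image_mono (Icc_subset_Icc h2 h3))) _
    _ = ∑ i ∈ Finset.range P₀.n, ∑ j ∈ (Finset.range P.n).filter (fun j => σ j = i),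
          EMetric.diam (f '' Icc (P₀.t (σ j)) (P₀.t (σ j + 1)))
            * ENNReal.ofReal (P.t (j + 1) - P.t j) :=
        (Finset.sum_fiberwise_of_maps_to
          (fun j hj => Finset.mem_range.2 (hσ j (Finset.mem_range.1 hj)).1) _).symm
    _ ≤ oscSum f P₀ := by
        refine Finset.sum_le_sum fun i hi => ?_
        have heq : ∀ j ∈ (Finset.range P.n).filter (fun j => σ j = i),
            EMetric.diam (f '' Icc (P₀.t (σ j)) (P₀.t (σ j + 1)))
              * ENNReal.ofReal (P.t (j + 1) - P.t j)
            = EMetric.diam (f '' Icc (P₀.t i) (P₀.t (i + 1)))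
              * ENNReal.ofReal (P.t (j + 1) - P.t j) := by
          intro j hj
          rw [(Finset.mem_filter.1 hj).2]
        rw [Finset.sum_congr rfl heq, ← Finset.mul_sum]
        refine mul_le_mul_right ?_ _
        have := P.sum_len_le ((Finset.range P.n).filter (fun j => σ j = i))
          (Finset.filter_subset _ _) (T := Ioc (P₀.t i) (P₀.t (i + 1))) ?_
        · calc _ ≤ volume (Ioc (P₀.t i) (P₀.t (i + 1))) := this
            _ = _ := Real.volume_Ioc
        · intro j hj
          obtain ⟨hjr, hji⟩ := Finset.mem_filter.1 hj
          obtain ⟨_, h2, h3⟩ := hσ j (Finset.mem_range.1 hjr)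
          rw [hji] at h2 h3
          exact Set.Ioc_subset_Ioc h2 h3

end

section
variable {X : Type*} [MetricSpace X] {a b : ℝ}

lemma bounded_of_darboux [Zero X] (f : ℝ → X) (h : DarbouxIntegrable f a b) :
    ∃ L, ∀ t ∈ Set.Icc a b, dist 0 (f t) ≤ L := by
  obtain ⟨P₀, hP₀⟩ := h 1 one_pos
  have hosc := hP₀ P₀ (subset_refl _)
  have htop : oscSum f P₀ ≠ ⊤ := (lt_of_lt_of_le hosc le_top).ne
  have hd : ∀ i < P₀.n, EMetric.diam (f '' Icc (P₀.t i) (P₀.t (i + 1))) ≠ ⊤ := by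
    intro i hi hcon
    apply htop
    have h1 : EMetric.diam (f '' Icc (P₀.t i) (P₀.t (i + 1)))
        * ENNReal.ofReal (P₀.t (i + 1) - P₀.t i) ≤ oscSum f P₀ :=
      Finset.single_le_sum (f := fun i => EMetric.diam (f '' Icc (P₀.t i) (P₀.t (i + 1)))
        * ENNReal.ofReal (P₀.t (i + 1) - P₀.t i)) (fun _ _ => zero_le) (Finset.mem_range.2 hi)
    rw [hcon, ENNReal.top_mul (by
      simp only [ne_eq, ENNReal.ofReal_eq_zero, not_le]
      exact P₀.len_pos hi)] at h1
    exact top_le_iff.1 h1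
  refine ⟨∑ i ∈ Finset.range P₀.n,
    (dist 0 (f (P₀.t i)) + (EMetric.diam (f '' Icc (P₀.t i) (P₀.t (i + 1)))).toReal),
    fun x hx => ?_⟩
  obtain ⟨i, hi, hmem⟩ := P₀.exists_idx hx
  have h1 : dist (f (P₀.t i)) (f x)
      ≤ (EMetric.diam (f '' Icc (P₀.t i) (P₀.t (i + 1)))).toReal := by
    have h2 : edist (f (P₀.t i)) (f x) ≤ EMetric.diam (f '' Icc (P₀.t i) (P₀.t (i + 1))) :=
      EMetric.edist_le_diam_of_mem
        (Set.mem_image_of_mem _ (Set.left_mem_Icc.2 (le_of_lt (P₀.mono i hi))))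
        (Set.mem_image_of_mem _ hmem)
    rw [dist_edist]
    exact ENNReal.toReal_mono (hd i hi) h2
  calc dist 0 (f x) ≤ dist 0 (f (P₀.t i)) + dist (f (P₀.t i)) (f x) := dist_triangle _ _ _
    _ ≤ dist 0 (f (P₀.t i)) + (EMetric.diam (f '' Icc (P₀.t i) (P₀.t (i + 1)))).toReal := by
        linarith
    _ ≤ _ := Finset.single_le_sum
        (f := fun i => dist 0 (f (P₀.t i)) + (EMetric.diam (f '' Icc (P₀.t i) (P₀.t (i+1)))).toReal)
        (fun j _ => add_nonneg dist_nonneg ENNReal.toReal_nonneg) (Finset.mem_range.2 hi)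

lemma null_of_darboux (f : ℝ → X) (h : DarbouxIntegrable f a b) :
    volume {t ∈ Set.Icc a b | ¬ ContinuousWithinAt f (Set.Icc a b) t} = 0 := by
  classical
  have key : ∀ k : ℕ, volume {t ∈ Set.Icc a b |
      ((k : ENNReal) + 1)⁻¹ ≤ oscillationWithin f (Set.Icc a b) t} = 0 := by
    intro k
    set c : ENNReal := ((k : ENNReal) + 1)⁻¹ with hc
    set Dk := {t ∈ Set.Icc a b | c ≤ oscillationWithin f (Set.Icc a b) t} with hDk
    have hc0 : c ≠ 0 := ENNReal.inv_ne_zero.2 (by simp)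
    have hct : c ≠ ⊤ := ENNReal.inv_ne_top.2 (by simp)
    have main : ∀ ε : ℝ, 0 < ε → volume Dk ≤ ENNReal.ofReal ε := by
      intro ε hε
      set ε' := ε / ((k : ℝ) + 1) with hε'def
      have hε' : 0 < ε' := by positivity
      obtain ⟨P₀, hP₀⟩ := h ε' hε'
      have hosc := hP₀ P₀ (subset_refl _)
      set Bad := (Finset.range P₀.n).filter
        (fun i => c ≤ EMetric.diam (f '' Icc (P₀.t i) (P₀.t (i + 1)))) with hBad
      have hcover : Dk ⊆ P₀.points ∪ ⋃ i ∈ Bad, Icc (P₀.t i) (P₀.t (i + 1)) := by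
        intro x hx
        by_cases hp : x ∈ P₀.points
        · exact Or.inl hp
        right
        obtain ⟨i, hi, hmem⟩ := P₀.exists_idx hx.1
        have hlt1 : P₀.t i < x := lt_of_le_of_ne hmem.1 (fun hcon => hp ⟨i, le_of_lt hi, hcon⟩)
        have hlt2 : x < P₀.t (i + 1) :=
          lt_of_le_of_ne hmem.2 (fun hcon => hp ⟨i + 1, hi, hcon.symm⟩)
        have hnhds : Icc (P₀.t i) (P₀.t (i + 1)) ∈ nhdsWithin x (Set.Icc a b) :=
          mem_nhdsWithin_of_mem_nhds (Icc_mem_nhds hlt1 hlt2)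
        have hosc_le : oscillationWithin f (Set.Icc a b) x
            ≤ EMetric.diam (f '' Icc (P₀.t i) (P₀.t (i + 1))) := by
          apply biInf_le
          exact Filter.mem_map.2 (Filter.mem_of_superset hnhds (Set.subset_preimage_image f _))
        exact Set.mem_biUnion (Finset.mem_filter.2 ⟨Finset.mem_range.2 hi,
          le_trans hx.2 hosc_le⟩) hmem
      have h2 : volume Dk ≤ ∑ i ∈ Bad, ENNReal.ofReal (P₀.t (i + 1) - P₀.t i) := by
        calc volume Dk ≤ volume (P₀.points ∪ ⋃ i ∈ Bad, Icc (P₀.t i) (P₀.t (i + 1))) :=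
              measure_mono hcover
          _ ≤ volume P₀.points + volume (⋃ i ∈ Bad, Icc (P₀.t i) (P₀.t (i + 1))) :=
              measure_union_le _ _
          _ = volume (⋃ i ∈ Bad, Icc (P₀.t i) (P₀.t (i + 1))) := by
              rw [P₀.points_finite.measure_zero, zero_add]
          _ ≤ ∑ i ∈ Bad, volume (Icc (P₀.t i) (P₀.t (i + 1))) :=
              measure_biUnion_finset_le _ _
          _ = ∑ i ∈ Bad, ENNReal.ofReal (P₀.t (i + 1) - P₀.t i) := by
              simp [Real.volume_Icc]
      have h3 : c * ∑ i ∈ Bad, ENNReal.ofReal (P₀.t (i + 1) - P₀.t i)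
          ≤ ENNReal.ofReal ε' := by
        rw [Finset.mul_sum]
        refine le_trans (le_trans (Finset.sum_le_sum fun i hi =>
          mul_le_mul_left (Finset.mem_filter.1 hi).2 _) ?_) (le_of_lt hosc)
        exact Finset.sum_le_sum_of_subset (Finset.filter_subset _ _)
      calc volume Dk ≤ ∑ i ∈ Bad, ENNReal.ofReal (P₀.t (i + 1) - P₀.t i) := h2
        _ = c⁻¹ * (c * ∑ i ∈ Bad, ENNReal.ofReal (P₀.t (i + 1) - P₀.t i)) := by
            rw [← mul_assoc, ENNReal.inv_mul_cancel hc0 hct, one_mul]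
        _ ≤ c⁻¹ * ENNReal.ofReal ε' := mul_le_mul_right h3 _
        _ ≤ ENNReal.ofReal ε := by
            rw [hc, inv_inv]
            have hcast : (k : ENNReal) + 1 = ENNReal.ofReal ((k : ℝ) + 1) := by
              rw [ENNReal.ofReal_add (by positivity) zero_le_one]
              simp
            rw [hcast, ← ENNReal.ofReal_mul (by positivity)]
            apply ENNReal.ofReal_le_ofReal
            rw [hε'def]
            rw [mul_div_cancel₀]
            positivity
    refine le_antisymm ?_ zero_le
    refine ENNReal.le_of_forall_pos_le_add fun δ hδ _ => ?_
    rw [zero_add]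
    calc volume Dk ≤ ENNReal.ofReal δ := main δ (by exact_mod_cast hδ)
      _ = δ := ENNReal.ofReal_coe_nnreal
  have hsub : {t ∈ Set.Icc a b | ¬ ContinuousWithinAt f (Set.Icc a b) t} ⊆
      ⋃ k : ℕ, {t ∈ Set.Icc a b | ((k : ENNReal) + 1)⁻¹ ≤ oscillationWithin f (Set.Icc a b) t} := by
    intro x hx
    have hne : oscillationWithin f (Set.Icc a b) x ≠ 0 := fun h0 =>
      hx.2 ((OscillationWithin.eq_zero_iff_continuousWithinAt f hx.1).1 h0)
    obtain ⟨n, hn⟩ := ENNReal.exists_inv_nat_lt hne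
    refine Set.mem_iUnion.2 ⟨n, hx.1, le_of_lt (lt_of_le_of_lt ?_ hn)⟩
    exact ENNReal.inv_le_inv.2 (le_add_right le_rfl)
  refine le_antisymm ?_ zero_le
  calc volume _ ≤ volume (⋃ k : ℕ, {t ∈ Set.Icc a b |
        ((k : ENNReal) + 1)⁻¹ ≤ oscillationWithin f (Set.Icc a b) t}) := measure_mono hsub
    _ ≤ ∑' k : ℕ, volume {t ∈ Set.Icc a b |
        ((k : ENNReal) + 1)⁻¹ ≤ oscillationWithin f (Set.Icc a b) t} := measure_iUnion_le _
    _ = ∑' _ : ℕ, (0 : ENNReal) := tsum_congr key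
    _ = 0 := tsum_zero

end

section
variable {a b : ℝ}

/-- The uniform partition of `[a,b]` into `N` pieces. -/
noncomputable def unifPartition (a b : ℝ) (hab : a < b) (N : ℕ) (hN : 0 < N) :
    TaggedPartition a b where
  n := N
  t := fun i => a + i * ((b - a) / N)
  s := fun i => a + i * ((b - a) / N)
  npos := hN
  left := by simp
  right := by field_simp; ring
  mono := by
    intro i _
    have h1 : (0 : ℝ) < (b - a) / N := by
      apply div_pos (by linarith) (by exact_mod_cast hN)
    push_cast
    nlinarith
  tag_mem := fun i hi => ⟨le_rfl, by
    have h1 : (0 : ℝ) < (b - a) / N := by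
      apply div_pos (by linarith) (by exact_mod_cast hN)
    push_cast
    nlinarith⟩

lemma unifPartition_len (hab : a < b) (N : ℕ) (hN : 0 < N) (i : ℕ) :
    (unifPartition a b hab N hN).t (i + 1) - (unifPartition a b hab N hN).t i
      = (b - a) / N := by
  simp only [unifPartition]
  push_cast
  ring

variable {X : Type*} [MetricSpace X]

lemma darboux_of_bounded_null (f : ℝ → X) (hab : a < b)
    (hb : ∃ L, ∀ u ∈ Set.Icc a b, ∀ v ∈ Set.Icc a b, dist (f u) (f v) ≤ L)
    (hnull : volume {t ∈ Set.Icc a b | ¬ ContinuousWithinAt f (Set.Icc a b) t} = 0) :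
    DarbouxIntegrable f a b := by
  classical
  intro ε hε
  obtain ⟨L, hL⟩ := hb
  set M := EMetric.diam (f '' Set.Icc a b) with hM
  have hML : M ≤ ENNReal.ofReal L := by
    apply EMetric.diam_le
    rintro x ⟨u, hu, rfl⟩ y ⟨v, hv, rfl⟩
    rw [edist_dist]
    exact ENNReal.ofReal_le_ofReal (hL u hu v hv)
  have hMt : M ≠ ⊤ := (lt_of_le_of_lt hML (by exact ENNReal.ofReal_lt_top)).ne
  set Mr := M.toReal with hMr
  have hMr0 : 0 ≤ Mr := ENNReal.toReal_nonneg
  set η := ε / (4 * (Mr + 1)) with hηdef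
  have hη : 0 < η := by positivity
  set e1 := ε / (2 * (b - a)) with he1def
  have he1 : 0 < e1 := by
    apply div_pos hε; nlinarith
  -- outer regular open set around the discontinuity set
  obtain ⟨U, hDU, hUopen, hUvol⟩ :=
    Set.exists_isOpen_lt_of_lt {t ∈ Set.Icc a b | ¬ ContinuousWithinAt f (Set.Icc a b) t}
      (ENNReal.ofReal η) (by rw [hnull]; exact ENNReal.ofReal_pos.2 hη)
  set K := Set.Icc a b \ U with hK
  have compK : IsCompact K := isCompact_Icc.diff hUopen
  have hKosc : ∀ x ∈ K, oscillationWithin f (Set.Icc a b) x < ENNReal.ofReal e1 := by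
    intro x hx
    have hcont : ContinuousWithinAt f (Set.Icc a b) x := by
      by_contra hc
      exact hx.2 (hDU ⟨hx.1, hc⟩)
    rw [hcont.oscillationWithin_eq_zero]
    exact ENNReal.ofReal_pos.2 he1
  obtain ⟨δ, hδ, hdiam⟩ := compK.uniform_oscillationWithin hKosc
  -- choose N so that mesh < δ
  set N := ⌈(b - a) / δ⌉₊ + 1 with hN
  have hNpos : 0 < N := Nat.succ_pos _
  have hmesh : (b - a) / N < δ := by
    have h1 : (b - a) / δ < N :=
      lt_of_le_of_lt (Nat.le_ceil _) (by exact_mod_cast Nat.lt_succ_self _)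
    rw [div_lt_iff₀ (by exact_mod_cast hNpos)]
    rw [div_lt_iff₀ hδ] at h1
    calc b - a < ↑N * δ := h1
      _ = δ * ↑N := mul_comm _ _
  set P₀ := unifPartition a b hab N hNpos with hP₀
  refine ⟨P₀, fun P hPsub => ?_⟩
  refine lt_of_le_of_lt (oscSum_mono f P₀ P hPsub) ?_
  -- now bound oscSum f P₀
  have hlen : ∀ i, P₀.t (i + 1) - P₀.t i = (b - a) / N := fun i => unifPartition_len hab N hNpos i
  set G := (Finset.range N).filter
    (fun i => (Set.Icc (P₀.t i) (P₀.t (i + 1)) ∩ K).Nonempty) with hG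
  have hn : P₀.n = N := rfl
  have hgood : ∀ i ∈ G, EMetric.diam (f '' Set.Icc (P₀.t i) (P₀.t (i + 1)))
      ≤ ENNReal.ofReal e1 := by
    intro i hi
    obtain ⟨x, hxI, hxK⟩ := (Finset.mem_filter.1 hi).2
    refine le_trans (EMetric.diam_mono (Set.image_mono (fun y hy => ?_))) (hdiam x hxK)
    constructor
    · rw [Metric.emetric_ball]
      have h1 : |y - x| ≤ P₀.t (i + 1) - P₀.t i := by
        rw [abs_sub_le_iff]
        constructor <;> [skip; skip] <;>
          · have := hy.1; have := hy.2; have := hxI.1; have := hxI.2; linarith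
      have h2 : dist y x < δ := by
        rw [Real.dist_eq]
        calc |y - x| ≤ P₀.t (i + 1) - P₀.t i := h1
          _ = (b - a) / N := hlen i
          _ < δ := hmesh
      exact h2
    · exact P₀.Icc_subset (hn ▸ Finset.mem_range.1 (Finset.mem_filter.1 hi).1) hy
  have hbad : ∀ i ∈ (Finset.range N).filter
      (fun i => ¬ (Set.Icc (P₀.t i) (P₀.t (i + 1)) ∩ K).Nonempty),
      Set.Ioc (P₀.t i) (P₀.t (i + 1)) ⊆ U := by
    intro i hi x hx
    obtain ⟨hir, hinot⟩ := Finset.mem_filter.1 hi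
    have hxab : x ∈ Set.Icc a b :=
      P₀.Icc_subset (hn ▸ Finset.mem_range.1 hir) (Set.Ioc_subset_Icc_self hx)
    by_contra hxU
    exact hinot ⟨x, Set.Ioc_subset_Icc_self hx, hxab, hxU⟩
  have hsum_len : ∑ i ∈ Finset.range N, ENNReal.ofReal (P₀.t (i + 1) - P₀.t i)
      = ENNReal.ofReal (b - a) := by
    rw [← ENNReal.ofReal_sum_of_nonneg (fun i _ => by
      rw [hlen]
      have : (0:ℝ) < (b - a) / N := div_pos (by linarith) (by exact_mod_cast hNpos)
      linarith)]
    congr 1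
    rw [Finset.sum_range_sub (fun i => P₀.t i)]
    show P₀.t N - P₀.t 0 = b - a
    rw [show P₀.t N = b from P₀.right, show P₀.t 0 = a from P₀.left]
  calc oscSum f P₀
      = (∑ i ∈ G, EMetric.diam (f '' Set.Icc (P₀.t i) (P₀.t (i + 1)))
          * ENNReal.ofReal (P₀.t (i + 1) - P₀.t i))
        + ∑ i ∈ (Finset.range N).filter
            (fun i => ¬ (Set.Icc (P₀.t i) (P₀.t (i + 1)) ∩ K).Nonempty),
          EMetric.diam (f '' Set.Icc (P₀.t i) (P₀.t (i + 1)))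
            * ENNReal.ofReal (P₀.t (i + 1) - P₀.t i) := by
        rw [oscSum, hn, ← Finset.sum_filter_add_sum_filter_not (Finset.range N)
          (fun i => (Set.Icc (P₀.t i) (P₀.t (i + 1)) ∩ K).Nonempty)]
    _ ≤ ENNReal.ofReal e1 * ENNReal.ofReal (b - a) + M * ENNReal.ofReal η := by
        apply add_le_add
        · calc _ ≤ ∑ i ∈ G, ENNReal.ofReal e1 * ENNReal.ofReal (P₀.t (i + 1) - P₀.t i) :=
                Finset.sum_le_sum fun i hi => mul_le_mul_left (hgood i hi) _
            _ = ENNReal.ofReal e1 * ∑ i ∈ G, ENNReal.ofReal (P₀.t (i + 1) - P₀.t i) := by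
                rw [Finset.mul_sum]
            _ ≤ _ := by
                apply mul_le_mul_right
                rw [← hsum_len]
                exact Finset.sum_le_sum_of_subset (Finset.filter_subset _ _)
        · calc _ ≤ ∑ i ∈ (Finset.range N).filter
                (fun i => ¬ (Set.Icc (P₀.t i) (P₀.t (i + 1)) ∩ K).Nonempty),
                M * ENNReal.ofReal (P₀.t (i + 1) - P₀.t i) := by
                refine Finset.sum_le_sum fun i hi => mul_le_mul_left ?_ _
                exact EMetric.diam_mono (Set.image_mono
                  (P₀.Icc_subset (hn ▸ Finset.mem_range.1 (Finset.mem_filter.1 hi).1)))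
            _ = M * ∑ i ∈ (Finset.range N).filter
                (fun i => ¬ (Set.Icc (P₀.t i) (P₀.t (i + 1)) ∩ K).Nonempty),
                ENNReal.ofReal (P₀.t (i + 1) - P₀.t i) := by rw [Finset.mul_sum]
            _ ≤ M * volume U := by
                apply mul_le_mul_right
                exact P₀.sum_len_le _ (by rw [hn]; exact Finset.filter_subset _ _) hbad
            _ ≤ _ := mul_le_mul_right (le_of_lt hUvol) _
    _ < ENNReal.ofReal ε := by
        have h1 : ENNReal.ofReal e1 * ENNReal.ofReal (b - a) = ENNReal.ofReal (ε / 2) := by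
          rw [← ENNReal.ofReal_mul (le_of_lt he1)]
          congr 1
          have hba : b - a ≠ 0 := by linarith
          rw [he1def]
          field_simp
        have h2 : M * ENNReal.ofReal η ≤ ENNReal.ofReal (ε / 4) := by
          calc M * ENNReal.ofReal η = ENNReal.ofReal Mr * ENNReal.ofReal η := by
                rw [hMr, ENNReal.ofReal_toReal hMt]
            _ = ENNReal.ofReal (Mr * η) := by rw [ENNReal.ofReal_mul hMr0]
            _ ≤ ENNReal.ofReal (ε / 4) := by
                apply ENNReal.ofReal_le_ofReal
                have h4 : ε / (4 * (Mr + 1)) * (4 * (Mr + 1)) = ε :=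
                  div_mul_cancel₀ _ (by positivity)
                rw [hηdef]
                nlinarith [h4, hη.le]
        calc _ ≤ ENNReal.ofReal (ε / 2) + ENNReal.ofReal (ε / 4) := by
              rw [h1]; exact add_le_add_right h2 _
          _ = ENNReal.ofReal (ε / 2 + ε / 4) := (ENNReal.ofReal_add (by positivity) (by positivity)).symm
          _ < ENNReal.ofReal ε := ENNReal.ofReal_lt_ofReal_iff hε |>.2 (by linarith)

end

/-- `f` is Darboux integrable iff `f` is bounded and continuous
almost everywhere on `[a,b]`. -/
theorem darbouxIntegrable_iff_bounded_and_ae_continuous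
    {X : Type*} [MetricSpace X] [AddCommGroup X] [Module ℝ X] [CompleteSpace X]
    (hinv : ∀ x y z : X, dist (x + z) (y + z) = dist x y)
    (a b : ℝ) (hab : a < b) (f : ℝ → X) :
    DarbouxIntegrable f a b ↔
      ((∃ L, ∀ t ∈ Set.Icc a b, dist 0 (f t) ≤ L) ∧
        volume {t ∈ Set.Icc a b | ¬ ContinuousWithinAt f (Set.Icc a b) t} = 0) := by
  constructor
  · intro h
    exact ⟨bounded_of_darboux f h, null_of_darboux f h⟩
  · rintro ⟨⟨L, hL⟩, hnull⟩
    refine darboux_of_bounded_null f hab ⟨L + L, fun u hu v hv => ?_⟩ hnull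
    have h1 := hL u hu
    have h2 := hL v hv
    calc dist (f u) (f v) ≤ dist (f u) 0 + dist 0 (f v) := dist_triangle _ _ _
      _ ≤ L + L := by rw [dist_comm (f u) 0]; linarith
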